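/- For any u, v ∈ {1,2}^{ℤ_{>0}}, the map f_{u,v}: X_u → X_v defined by f_{u,v}(0) = 0 and f_{u,v}(x) = (2^{u_n}/2^{v_n})(x - 1/2^n) + 1/2^n for x ∈ I(n, u_n) satisfies (1/2)|x - y| ≤ |f_{u,v}(x) - f_{u,v}(y)| ≤ 2|x - y| for all x, y ∈ X_u. -/
import Mathlib


/-- The interval `I(n,m) = [1/2^n, 1/2^n + 1/2^(n+m)]`. -/
def Iset (n m : ℕ) : Set ℝ := Set.Icc ((1:ℝ)/2^n) ((1:ℝ)/2^n + 1/2^(n+m))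

/-- `X_u = {0} ∪ ⋃_{n ≥ 1} I(n, u_n)`, with the Euclidean metric inherited from `ℝ`. -/
def Xset (u : ℕ+ → ℕ) : Set ℝ := {0} ∪ ⋃ n : ℕ+, Iset (n : ℕ) (u n)

private lemma pow_facts (n p q : ℕ) (hp : p = 1 ∨ p = 2) (hq : q = 1 ∨ q = 2) :
    (1:ℝ)/2^(n+p) ≤ (1/2^n)/2 ∧ ((2:ℝ)^p/2^q) * ((1:ℝ)/2^(n+p)) ≤ (1/2^n)/2 ∧
      (1:ℝ)/2 ≤ (2:ℝ)^p/2^q ∧ (2:ℝ)^p/2^q ≤ 2 := by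
  have h2 : (0:ℝ) < 2^n := by positivity
  have hh : ((1:ℝ)/2)^n * 2^n = 1 := by rw [div_pow, one_pow]; field_simp
  rcases hp with rfl | rfl <;> rcases hq with rfl | rfl <;>
    refine ⟨?_, ?_, by norm_num, by norm_num⟩ <;>
    · first
        | (rw [pow_add, div_mul_div_comm, div_le_div_iff₀ (by positivity) (by positivity)]
           ring_nf; nlinarith [hh])
        | (rw [pow_add, div_le_div_iff₀ (by positivity) (by positivity)]
           ring_nf; nlinarith [hh])

private lemma cross_abs (A B x y c c' e' fx fy : ℝ)
    (hB : 0 < B) (hBA : B ≤ A/2)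
    (hc1 : 1/2 ≤ c) (hc2 : c ≤ 2) (hc'0 : 0 ≤ c')
    (hx : A ≤ x) (hy1 : B ≤ y) (hy2 : y ≤ B + e')
    (he' : e' ≤ B/2) (hce' : c' * e' ≤ B/2)
    (hfx : fx = A + c*(x-A)) (hfy : fy = B + c'*(y-B)) :
    (1/2) * |x - y| ≤ |fx - fy| ∧ |fx - fy| ≤ 2 * |x - y| := by
  have hcy : c' * (y - B) ≤ c' * e' := mul_le_mul_of_nonneg_left (by linarith) hc'0
  have hcy0 : 0 ≤ c' * (y - B) := mul_nonneg hc'0 (by linarith)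
  have hcx0 : 0 ≤ c * (x - A) := mul_nonneg (by linarith) (by linarith)
  have h1 : 0 < x - y := by linarith
  have h2 : 0 < fx - fy := by rw [hfx, hfy]; nlinarith
  rw [abs_of_pos h1, abs_of_pos h2]
  constructor
  · rw [hfx, hfy]
    nlinarith [mul_nonneg (by linarith : (0:ℝ) ≤ c - 1/2) (by linarith : (0:ℝ) ≤ x - A)]
  · rw [hfx, hfy]
    nlinarith [mul_nonneg (by linarith : (0:ℝ) ≤ 2 - c) (by linarith : (0:ℝ) ≤ x - A)]

private lemma zero_abs (B y c' e' fy : ℝ) (hB : 0 < B) (hy1 : B ≤ y) (hy2 : y ≤ B + e')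
    (he' : e' ≤ B/2) (hc'0 : 0 ≤ c') (hce' : c' * e' ≤ B/2) (hfy : fy = B + c'*(y-B)) :
    (1/2) * y ≤ fy ∧ fy ≤ 2 * y ∧ 0 < y ∧ 0 < fy := by
  have hcy : c' * (y - B) ≤ c' * e' := mul_le_mul_of_nonneg_left (by linarith) hc'0
  have hcy0 : 0 ≤ c' * (y - B) := mul_nonneg hc'0 (by linarith)
  refine ⟨by rw [hfy]; linarith, by rw [hfy]; linarith, by linarith, by rw [hfy]; linarith⟩

/-- The piecewise-affine map `f_{u,v} : X_u → X_v` is bi-Lipschitz with constants `1/2`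
and `2`. -/
theorem fuv_biLipschitz (u v : ℕ+ → ℕ) (hu : ∀ n, u n = 1 ∨ u n = 2)
    (hv : ∀ n, v n = 1 ∨ v n = 2) (f : ℝ → ℝ) (hf0 : f 0 = 0)
    (hfI : ∀ n : ℕ+, ∀ x ∈ Iset (n : ℕ) (u n),
      f x = ((2:ℝ)^(u n) / 2^(v n)) * (x - 1/2^(n:ℕ)) + 1/2^(n:ℕ)) :
    ∀ x ∈ Xset u, ∀ y ∈ Xset u,
      (1/2) * |x - y| ≤ |f x - f y| ∧ |f x - f y| ≤ 2 * |x - y| := by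
  have hmem : ∀ z ∈ Xset u, z = 0 ∨ ∃ n : ℕ+, z ∈ Iset (n:ℕ) (u n) := by
    intro z hz
    rcases hz with hz | hz
    · left; simpa using hz
    · right; simpa [Set.mem_iUnion] using hz
  -- cross case, n < m (so interval of x is to the right of interval of y)
  have cross : ∀ n m : ℕ+, (n:ℕ) < (m:ℕ) → ∀ x ∈ Iset (n:ℕ) (u n), ∀ y ∈ Iset (m:ℕ) (u m),
      (1/2) * |x - y| ≤ |f x - f y| ∧ |f x - f y| ≤ 2 * |x - y| := by
    intro n m hnm x hxn y hym
    obtain ⟨hx1, hx2⟩ := hxn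
    obtain ⟨hy1, hy2⟩ := hym
    obtain ⟨hen, _, hcn1, hcn2⟩ := pow_facts (n:ℕ) (u n) (v n) (hu n) (hv n)
    obtain ⟨hem, hcem, hcm1, _⟩ := pow_facts (m:ℕ) (u m) (v m) (hu m) (hv m)
    have hBA : (1:ℝ)/2^(m:ℕ) ≤ (1/2^(n:ℕ))/2 := by
      have hle : (2:ℝ)^((n:ℕ)+1) ≤ 2^(m:ℕ) :=
        pow_le_pow_right₀ (by norm_num) hnm
      have h1 : (1:ℝ)/2^(m:ℕ) ≤ 1/2^((n:ℕ)+1) :=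
        one_div_le_one_div_of_le (by positivity) hle
      have h2 : (1:ℝ)/2^((n:ℕ)+1) = (1/2^(n:ℕ))/2 := by rw [pow_succ]; ring
      linarith
    exact cross_abs (1/2^(n:ℕ)) (1/2^(m:ℕ)) x y ((2:ℝ)^(u n)/2^(v n)) ((2:ℝ)^(u m)/2^(v m))
      (1/2^((m:ℕ)+u m)) (f x) (f y) (by positivity) hBA hcn1 hcn2 (by positivity)
      hx1 hy1 hy2 hem hcem (by rw [hfI n x ⟨hx1, hx2⟩]; ring) (by rw [hfI m y ⟨hy1, hy2⟩]; ring)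
  intro x hx y hy
  rcases hmem x hx with rfl | ⟨n, hxn⟩
  · rcases hmem y hy with rfl | ⟨m, hym⟩
    · simp [hf0]
    · obtain ⟨hy1, hy2⟩ := hym
      obtain ⟨hem, hcem, hcm1, _⟩ := pow_facts (m:ℕ) (u m) (v m) (hu m) (hv m)
      obtain ⟨Z1, Z2, Z3, Z4⟩ := zero_abs ((1:ℝ)/2^(m:ℕ)) y ((2:ℝ)^(u m)/2^(v m))
        (1/2^((m:ℕ)+u m)) (f y) (by positivity) hy1 hy2 hem (by positivity) hcem
        (by rw [hfI m y ⟨hy1, hy2⟩]; ring)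
      rw [hf0, zero_sub, zero_sub, abs_neg, abs_neg, abs_of_pos Z3, abs_of_pos Z4]
      exact ⟨Z1, Z2⟩
  · rcases hmem y hy with rfl | ⟨m, hym⟩
    · obtain ⟨hx1, hx2⟩ := hxn
      obtain ⟨hen, hcen, hcn1, _⟩ := pow_facts (n:ℕ) (u n) (v n) (hu n) (hv n)
      obtain ⟨Z1, Z2, Z3, Z4⟩ := zero_abs ((1:ℝ)/2^(n:ℕ)) x ((2:ℝ)^(u n)/2^(v n))
        (1/2^((n:ℕ)+u n)) (f x) (by positivity) hx1 hx2 hen (by positivity) hcen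
        (by rw [hfI n x ⟨hx1, hx2⟩]; ring)
      rw [hf0, sub_zero, sub_zero, abs_of_pos Z3, abs_of_pos Z4]
      exact ⟨Z1, Z2⟩
    · rcases lt_trichotomy n m with h | rfl | h
      · exact cross n m (by exact_mod_cast h) x hxn y hym
      · -- same interval
        obtain ⟨hx1, hx2⟩ := hxn
        obtain ⟨hy1, hy2⟩ := hym
        obtain ⟨_, _, hcn1, hcn2⟩ := pow_facts (n:ℕ) (u n) (v n) (hu n) (hv n)
        have key : f x - f y = ((2:ℝ)^(u n)/2^(v n)) * (x - y) := by
          rw [hfI n x ⟨hx1, hx2⟩, hfI n y ⟨hy1, hy2⟩]; ring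
        have hcpos : (0:ℝ) < (2:ℝ)^(u n)/2^(v n) := by positivity
        rw [key, abs_mul, abs_of_pos hcpos]
        have habs : (0:ℝ) ≤ |x - y| := abs_nonneg _
        constructor <;> nlinarith
      · obtain ⟨H1, H2⟩ := cross m n (by exact_mod_cast h) y hym x hxn
        rw [abs_sub_comm x y, abs_sub_comm (f x) (f y)]
        exact ⟨H1, H2⟩
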